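/- For 1 ≤ r ≤ m, the Berman codes are nested: Ber_n^{r}(m) ⊆ Ber_n^{r−1}(m), and the Dual Berman codes are nested in the opposite direction: B_n^{r−1}(m) ⊆ B_n^{r}(m). -/

import Mathlib

open scoped BigOperators

/-- The `l`-th block (of length `n^m`) of a vector of length `n^(m+1)`,
where the first coordinate of the index tuple selects the block. -/
def blockAt (n m : ℕ) (l : Fin n) (v : (Fin (m + 1) → Fin n) → ZMod 2) :
    (Fin m → Fin n) → ZMod 2 :=
  fun j => v (Fin.cons l j)

/-- Berman code `Ber_n^r(m) ⊆ F_2^{n^m}`, coordinates indexed by `H^m` with `H = Fin n`.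
`Ber_n^m(m) = {0}`, `Ber_n^0(m)` is the single parity-check code, and for `1 ≤ r`,
a codeword is a concatenation `(v_0|…|v_{n-1})` with each block in `Ber_n^{r-1}(m-1)`
and the sum of the blocks in `Ber_n^r(m-1)`. -/
def Ber (n : ℕ) : ℕ → (m : ℕ) → Set ((Fin m → Fin n) → ZMod 2)
  | _, 0 => {0}
  | 0, (m + 1) => {c | ∑ i, c i = 0}
  | (r + 1), (m + 1) =>
      {v | (∀ l : Fin n, blockAt n m l v ∈ Ber n r m) ∧
        (fun j => ∑ l : Fin n, v (Fin.cons l j)) ∈ Ber n (r + 1) m}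

/-- Dual Berman code `B_n^r(m) ⊆ F_2^{n^m}`.
`B_n^m(m)` is the full space, `B_n^0(m)` is the repetition code, and for `1 ≤ r`,
a codeword is `(u+u_0|…|u+u_{n-2}|u)` with each `u_l ∈ B_n^{r-1}(m-1)` and `u ∈ B_n^r(m-1)`. -/
def DBer (n : ℕ) : ℕ → (m : ℕ) → Set ((Fin m → Fin n) → ZMod 2)
  | _, 0 => Set.univ
  | 0, (m + 1) => {c | ∃ a : ZMod 2, c = fun _ => a}
  | (r + 1), (m + 1) =>
      {v | ∃ u ∈ DBer n (r + 1) m, ∃ w : Fin n → ((Fin m → Fin n) → ZMod 2),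
        (∀ l, w l ∈ DBer n r m) ∧
        (∀ l : Fin n, blockAt n m l v = if l.val = n - 1 then u else u + w l)}

/-- Star product of two codes: the span of all coordinatewise products. -/
def starProd {ι : Type*} (C D : Set (ι → ZMod 2)) : Submodule (ZMod 2) (ι → ZMod 2) :=
  Submodule.span (ZMod 2) {x | ∃ c ∈ C, ∃ d ∈ D, x = c * d}

/-- Dual code w.r.t. the standard bilinear form. -/
def dualCode {ι : Type*} [Fintype ι] (C : Set (ι → ZMod 2)) : Set (ι → ZMod 2) :=
  {x | ∀ c ∈ C, ∑ i, x i * c i = 0}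

/-- Partial order on tuples: `j ⪯ i` iff `supp(j) ⊆ supp(i)` and `j` agrees with `i` on
`supp(j)`. -/
def preceq {n m : ℕ} (j i : Fin m → Fin n) : Prop :=
  ∀ s, (j s).val ≠ 0 → j s = i s

instance {n m : ℕ} (j i : Fin m → Fin n) : Decidable (preceq j i) := by
  unfold preceq; infer_instance

/-- Hamming weight of a tuple in `H^m`: the number of nonzero entries. -/
def tupleWt {n m : ℕ} (j : Fin m → Fin n) : ℕ :=
  (Finset.univ.filter fun s => (j s).val ≠ 0).card

/-- The vector `c_m(i')`, the indicator of `{i : i ⪯ i'}`. -/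
def cm {n m : ℕ} (i' : Fin m → Fin n) : (Fin m → Fin n) → ZMod 2 :=
  fun i => if preceq i i' then 1 else 0

/-- The vector `d_m(i')`, the indicator of `{i : i ⪰ i'}`. -/
def dm {n m : ℕ} (i' : Fin m → Fin n) : (Fin m → Fin n) → ZMod 2 :=
  fun i => if preceq i' i then 1 else 0

/-- Standard basis vector of `F_2^{n^m}` at coordinate `v`. -/
def eVec {n m : ℕ} (v : Fin m → Fin n) : (Fin m → Fin n) → ZMod 2 :=
  fun i => if i = v then 1 else 0

lemma Ber_zero_mem (n : ℕ) : ∀ (m r : ℕ), (0 : (Fin m → Fin n) → ZMod 2) ∈ Ber n r m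
  | 0, 0 => rfl
  | 0, (_ + 1) => rfl
  | (m + 1), 0 => by simp [Ber]
  | (m + 1), (r + 1) => by
      refine ⟨fun l => Ber_zero_mem n m r, ?_⟩
      have h : (fun j : Fin m → Fin n =>
          ∑ l : Fin n, (0 : (Fin (m + 1) → Fin n) → ZMod 2) (Fin.cons l j)) =
          (0 : (Fin m → Fin n) → ZMod 2) := by
        funext j; simp
      show (fun j : Fin m → Fin n =>
          ∑ l : Fin n, (0 : (Fin (m + 1) → Fin n) → ZMod 2) (Fin.cons l j)) ∈ Ber n (r + 1) m
      rw [h]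
      exact Ber_zero_mem n m (r + 1)

lemma Ber_eq_zero (n : ℕ) : ∀ (m r : ℕ), m ≤ r →
    ∀ v ∈ Ber n r m, v = 0
  | 0, 0, _, v, hv => hv
  | 0, (_ + 1), _, v, hv => hv
  | (m + 1), 0, h, _, _ => absurd h (by omega)
  | (m + 1), (r + 1), h, v, hv => by
      funext i
      have hb := hv.1 (i 0)
      have h0 : blockAt n m (i 0) v = 0 :=
        Ber_eq_zero n m r (Nat.succ_le_succ_iff.mp h) _ hb
      have h1 : blockAt n m (i 0) v (Fin.tail i) = 0 := by rw [h0]; rfl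
      simpa [blockAt, Fin.cons_self_tail] using h1

lemma Ber_zero_sum (n : ℕ) : ∀ (m : ℕ), ∀ c ∈ Ber n 0 m, ∑ i, c i = 0
  | 0, c, hc => by
      have : c = 0 := hc
      subst this; simp
  | (m + 1), c, hc => hc

lemma sum_cons_decomp (n m : ℕ) (c : (Fin (m + 1) → Fin n) → ZMod 2) :
    ∑ i, c i = ∑ l : Fin n, ∑ j : Fin m → Fin n, c (Fin.cons l j) := by
  calc ∑ i, c i = ∑ p : Fin n × (Fin m → Fin n), c (Fin.cons p.1 p.2) :=
        Fintype.sum_equiv (Fin.consEquiv fun _ : Fin (m + 1) => Fin n).symm c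
          (fun p => c (Fin.cons p.1 p.2)) (fun i => by simp [Fin.consEquiv])
    _ = ∑ l : Fin n, ∑ j : Fin m → Fin n, c (Fin.cons l j) := Fintype.sum_prod_type _

lemma DBer_const_mem (n : ℕ) (a : ZMod 2) : ∀ (m r : ℕ),
    (fun _ => a) ∈ DBer n r m
  | 0, 0 => trivial
  | 0, (_ + 1) => trivial
  | (m + 1), 0 => ⟨a, rfl⟩
  | (m + 1), (r + 1) => by
      refine ⟨fun _ => a, DBer_const_mem n a m (r + 1), fun _ _ => 0,
        fun l => DBer_const_mem n 0 m r, fun l => ?_⟩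
      split_ifs <;> funext j <;> simp [blockAt]

lemma DBer_univ_mem (n : ℕ) (hn : 1 ≤ n) : ∀ (m r : ℕ), m ≤ r →
    ∀ v : (Fin m → Fin n) → ZMod 2, v ∈ DBer n r m
  | 0, 0, _, v => trivial
  | 0, (_ + 1), _, v => trivial
  | (m + 1), 0, h, _ => absurd h (by omega)
  | (m + 1), (r + 1), h, v => by
      have hm : m ≤ r := Nat.succ_le_succ_iff.mp h
      have hlast : n - 1 < n := by omega
      refine ⟨blockAt n m ⟨n - 1, hlast⟩ v,
        DBer_univ_mem n hn m (r + 1) (le_trans hm (Nat.le_succ r)) _,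
        fun l => blockAt n m ⟨n - 1, hlast⟩ v + blockAt n m l v,
        fun l => DBer_univ_mem n hn m r hm _, fun l => ?_⟩
      split_ifs with hl
      · have : l = ⟨n - 1, hlast⟩ := Fin.ext hl
        rw [this]
      · funext j
        have key : ∀ x y : ZMod 2, x + (x + y) = y := by decide
        simp [Pi.add_apply, key]

lemma nesting_main (n : ℕ) (hn : 1 ≤ n) (m : ℕ) : ∀ r, 1 ≤ r → r ≤ m →
    Ber n r m ⊆ Ber n (r - 1) m ∧ DBer n (r - 1) m ⊆ DBer n r m := by
  induction m with
  | zero => intro r hr hrm; omega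
  | succ m ih =>
    intro r hr hrm
    rcases Nat.lt_or_ge r (m + 1) with hlt | hge
    · match r, hr with
      | 1, _ =>
        constructor
        · intro v hv
          show ∑ i, v i = 0
          rw [sum_cons_decomp]
          exact Finset.sum_eq_zero fun l _ => Ber_zero_sum n m _ (hv.1 l)
        · rintro c ⟨a, rfl⟩
          refine ⟨fun _ => a, DBer_const_mem n a m 1, fun _ _ => 0,
            fun l => DBer_const_mem n 0 m 0, fun l => ?_⟩
          split_ifs <;> funext j <;> simp [blockAt]
      | (t + 2), _ =>
        have h1 := ih (t + 1) (by omega) (by omega)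
        have h2 := ih (t + 2) (by omega) (by omega)
        constructor
        · rintro v ⟨hb, hs⟩
          exact ⟨fun l => h1.1 (hb l), h2.1 hs⟩
        · rintro v ⟨u, hu, w, hw, hcond⟩
          exact ⟨u, h2.2 hu, w, fun l => h1.2 (hw l), hcond⟩
    · have hreq : r = m + 1 := le_antisymm hrm hge
      subst hreq
      constructor
      · intro v hv
        have hv0 : v = 0 := Ber_eq_zero n (m + 1) (m + 1) le_rfl v hv
        rw [hv0]
        exact Ber_zero_mem n (m + 1) (m + 1 - 1)
      · intro v _
        exact DBer_univ_mem n hn (m + 1) (m + 1) le_rfl v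

/-- nesting. For `1 ≤ r ≤ m`, `Ber_n^r(m) ⊆ Ber_n^{r-1}(m)` and
`B_n^{r-1}(m) ⊆ B_n^r(m)`. -/
theorem stmt4 (n m r : ℕ) (hn : 2 ≤ n) (hr : 1 ≤ r) (hrm : r ≤ m) :
    Ber n r m ⊆ Ber n (r - 1) m ∧ DBer n (r - 1) m ⊆ DBer n r m :=
  nesting_main n (by omega) m r hr hrm
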